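/- For A_i = E_{i,i+1} − E_{i+1,i} in M_n(ℝ) and any t ∈ ℝ, the matrix (exp((π/2)A_{i+1}) exp(−t A_i) exp((π/2)A_{i+1}))^{-1} · exp((π/2)A_i) exp(t A_{i+1}) exp((π/2)A_i) equals the diagonal matrix with entries 1 everywhere except −1 at positions i and i+2. -/

import Mathlib

open NormedSpace Real

/-- The standard skew-symmetric generator `A_i = E_{i,i+1} − E_{i+1,i}`, given here by a
pair of indices `p, q` standing for `i` and `i+1`. -/
def Amat {n : ℕ} (p q : Fin n) : Matrix (Fin n) (Fin n) ℝ :=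
  Matrix.single p q 1 - Matrix.single q p 1

/-- Abbreviation for real matrix units. -/
def Em {n : ℕ} (a b : Fin n) : Matrix (Fin n) (Fin n) ℝ :=
  Matrix.single a b 1

theorem Em_mul_same {n : ℕ} (a b c : Fin n) : Em a b * Em b c = Em a c := by
  simp [Em]

theorem Em_mul_ne {n : ℕ} {b c : Fin n} (h : b ≠ c) (a d : Fin n) :
    Em a b * Em c d = 0 := by
  simp only [Em]
  exact Matrix.single_mul_single_of_ne 1 a b c h 1

theorem Amat_eq {n : ℕ} (p q : Fin n) : Amat p q = Em p q - Em q p := rfl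

theorem Amat_sq {n : ℕ} {p q : Fin n} (hpq : p ≠ q) :
    (Amat p q) ^ 2 = -(Em p p) - Em q q := by
  rw [sq, Amat_eq]
  simp only [sub_mul, mul_sub, Em_mul_same, Em_mul_ne hpq, Em_mul_ne hpq.symm]
  module

theorem Amat_cube {n : ℕ} {p q : Fin n} (hpq : p ≠ q) :
    (Amat p q) ^ 3 = -(Amat p q) := by
  rw [pow_succ, Amat_sq hpq, Amat_eq]
  simp only [sub_mul, mul_sub, neg_mul, Em_mul_same, Em_mul_ne hpq, Em_mul_ne hpq.symm]
  module

theorem exp_of_cube {n : ℕ} (A : Matrix (Fin n) (Fin n) ℝ) (h : A ^ 3 = -A) (t : ℝ) :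
    exp (t • A) = 1 + Real.sin t • A + (1 - Real.cos t) • (A ^ 2) := by
  letI : NormedRing (Matrix (Fin n) (Fin n) ℝ) := Matrix.linftyOpNormedRing
  letI : NormedAlgebra ℝ (Matrix (Fin n) (Fin n) ℝ) := Matrix.linftyOpNormedAlgebra
  set g : ℝ → Matrix (Fin n) (Fin n) ℝ :=
    fun u => 1 + Real.sin u • A + (1 - Real.cos u) • (A ^ 2) with hg
  set f : ℝ → Matrix (Fin n) (Fin n) ℝ := fun u => exp (u • (-A)) * g u with hf
  have hderiv : ∀ u : ℝ, HasDerivAt f 0 u := by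
    intro u
    have h1 : HasDerivAt (fun v : ℝ => exp (v • (-A))) (exp (u • (-A)) * (-A)) u :=
      hasDerivAt_exp_smul_const (-A) u
    have h2 : HasDerivAt g (Real.cos u • A + Real.sin u • (A ^ 2)) u := by
      have hs : HasDerivAt (fun v : ℝ => Real.sin v • A) (Real.cos u • A) u :=
        (Real.hasDerivAt_sin u).smul_const A
      have hc : HasDerivAt (fun v : ℝ => (1 - Real.cos v) • (A ^ 2))
          (Real.sin u • (A ^ 2)) u := by
        have := ((hasDerivAt_const u (1 : ℝ)).sub (Real.hasDerivAt_cos u)).smul_const (A ^ 2)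
        simp at this; exact this
      have h4 := ((hasDerivAt_const u
        (1 : Matrix (Fin n) (Fin n) ℝ)).add hs).add hc
      simp only [zero_add] at h4; exact h4
    have := h1.mul h2
    have hAg : A * g u = Real.cos u • A + Real.sin u • (A ^ 2) := by
      simp only [hg, mul_add, mul_one, mul_smul_comm, ← sq]
      have h3 : A * A ^ 2 = -A := by rw [← pow_succ']; exact h
      rw [h3]
      module
    have h0 : exp (u • (-A)) * (-A) * g u
        + exp (u • (-A)) * (Real.cos u • A + Real.sin u • (A ^ 2)) = 0 := by
      rw [mul_assoc, neg_mul, hAg, mul_neg, neg_add_cancel]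
    exact h0 ▸ this
  have hconst : f t = f 0 := by
    refine is_const_of_deriv_eq_zero (fun u => (hderiv u).differentiableAt) ?_ t 0
    intro u; exact (hderiv u).deriv
  have hf0 : f 0 = 1 := by simp [hf, hg]
  have key : exp (t • (-A)) * g t = 1 := by rw [← hf0]; exact hconst
  have hcom : Commute (t • A) (t • (-A)) := by
    simp only [smul_neg]; exact (Commute.refl (t • A)).neg_right
  have hmul : exp (t • A) * exp (t • (-A)) = 1 := by
    rw [← Matrix.exp_add_of_commute _ _ hcom]
    simp
  calc exp (t • A) = exp (t • A) * (exp (t • (-A)) * g t) := by rw [key, mul_one]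
    _ = (exp (t • A) * exp (t • (-A))) * g t := by rw [mul_assoc]
    _ = g t := by rw [hmul, one_mul]


theorem exp_Amat {n : ℕ} {p q : Fin n} (hpq : p ≠ q) (u : ℝ) :
    exp (u • Amat p q) =
      1 + (-1 + Real.cos u : ℝ) • Em p p + (Real.sin u : ℝ) • Em p q
        + (-Real.sin u : ℝ) • Em q p + (-1 + Real.cos u : ℝ) • Em q q := by
  rw [exp_of_cube _ (Amat_cube hpq) u, Amat_sq hpq, Amat_eq]
  module

theorem exp_Amat_pos {n : ℕ} {p q : Fin n} (hpq : p ≠ q) :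
    exp ((π / 2) • Amat p q) = 1 - Em p p + Em p q - Em q p - Em q q := by
  rw [exp_Amat hpq]
  simp only [Real.sin_pi_div_two, Real.cos_pi_div_two]
  module

theorem exp_Amat_neg {n : ℕ} {p q : Fin n} (hpq : p ≠ q) :
    exp ((-(π / 2)) • Amat p q) = 1 - Em p p - Em p q + Em q p - Em q q := by
  rw [exp_Amat hpq]
  simp only [Real.sin_neg, Real.cos_neg, Real.sin_pi_div_two, Real.cos_pi_div_two]
  module


theorem sixprod {n : ℕ} (p₀ p₁ p₂ : Fin n) (h01 : p₀ ≠ p₁) (h10 : p₁ ≠ p₀)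
    (h02 : p₀ ≠ p₂) (h20 : p₂ ≠ p₀) (h12 : p₁ ≠ p₂) (h21 : p₂ ≠ p₁) (s c : ℝ) :
    (1 - Em p₁ p₁ - Em p₁ p₂ + Em p₂ p₁ - Em p₂ p₂) *
      (1 + (-1+c : ℝ) • Em p₀ p₀ + (s : ℝ) • Em p₀ p₁ + (-s : ℝ) • Em p₁ p₀ + (-1+c : ℝ) • Em p₁ p₁) *
      (1 - Em p₁ p₁ - Em p₁ p₂ + Em p₂ p₁ - Em p₂ p₂) *
      (1 - Em p₀ p₀ + Em p₀ p₁ - Em p₁ p₀ - Em p₁ p₁) *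
      (1 + (-1+c : ℝ) • Em p₁ p₁ + (s : ℝ) • Em p₁ p₂ + (-s : ℝ) • Em p₂ p₁ + (-1+c : ℝ) • Em p₂ p₂) *
      (1 - Em p₀ p₀ + Em p₀ p₁ - Em p₁ p₀ - Em p₁ p₁) =
      1 + (-1-c*c-s*s : ℝ) • Em p₀ p₀ + (-1-c*c-s*s : ℝ) • Em p₂ p₂ := by
  have step1 : (1 - Em p₁ p₁ - Em p₁ p₂ + Em p₂ p₁ - Em p₂ p₂) *
      (1 + (-1+c : ℝ) • Em p₀ p₀ + (s : ℝ) • Em p₀ p₁ + (-s : ℝ) • Em p₁ p₀ + (-1+c : ℝ) • Em p₁ p₁) =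
      1 + (-1+c : ℝ) • Em p₀ p₀ + (s : ℝ) • Em p₀ p₁ - Em p₁ p₁ - Em p₁ p₂ + (-s : ℝ) • Em p₂ p₀ + (c : ℝ) • Em p₂ p₁ - Em p₂ p₂ := by
    simp only [mul_add, add_mul, mul_sub, sub_mul, mul_one, one_mul, smul_mul_assoc,
      mul_smul_comm, smul_smul, Em_mul_same, Em_mul_ne h01, Em_mul_ne h10, Em_mul_ne h02,
      Em_mul_ne h20, Em_mul_ne h12, Em_mul_ne h21, smul_zero, mul_zero, zero_mul, add_zero,
      zero_add, sub_zero, zero_sub] <;> module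
  have step2 : (1 + (-1+c : ℝ) • Em p₀ p₀ + (s : ℝ) • Em p₀ p₁ - Em p₁ p₁ - Em p₁ p₂ + (-s : ℝ) • Em p₂ p₀ + (c : ℝ) • Em p₂ p₁ - Em p₂ p₂) *
      (1 - Em p₁ p₁ - Em p₁ p₂ + Em p₂ p₁ - Em p₂ p₂) =
      1 + (-1+c : ℝ) • Em p₀ p₀ + (-s : ℝ) • Em p₀ p₂ + (-2 : ℝ) • Em p₁ p₁ + (-s : ℝ) • Em p₂ p₀ + (-1-c : ℝ) • Em p₂ p₂ := by
    simp only [mul_add, add_mul, mul_sub, sub_mul, mul_one, one_mul, smul_mul_assoc,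
      mul_smul_comm, smul_smul, Em_mul_same, Em_mul_ne h01, Em_mul_ne h10, Em_mul_ne h02,
      Em_mul_ne h20, Em_mul_ne h12, Em_mul_ne h21, smul_zero, mul_zero, zero_mul, add_zero,
      zero_add, sub_zero, zero_sub] <;> module
  have step3 : (1 + (-1+c : ℝ) • Em p₀ p₀ + (-s : ℝ) • Em p₀ p₂ + (-2 : ℝ) • Em p₁ p₁ + (-s : ℝ) • Em p₂ p₀ + (-1-c : ℝ) • Em p₂ p₂) *
      (1 - Em p₀ p₀ + Em p₀ p₁ - Em p₁ p₀ - Em p₁ p₁) =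
      1 - Em p₀ p₀ + (c : ℝ) • Em p₀ p₁ + (-s : ℝ) • Em p₀ p₂ + Em p₁ p₀ - Em p₁ p₁ + (-s : ℝ) • Em p₂ p₁ + (-1-c : ℝ) • Em p₂ p₂ := by
    simp only [mul_add, add_mul, mul_sub, sub_mul, mul_one, one_mul, smul_mul_assoc,
      mul_smul_comm, smul_smul, Em_mul_same, Em_mul_ne h01, Em_mul_ne h10, Em_mul_ne h02,
      Em_mul_ne h20, Em_mul_ne h12, Em_mul_ne h21, smul_zero, mul_zero, zero_mul, add_zero,
      zero_add, sub_zero, zero_sub] <;> module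
  have step4 : (1 - Em p₀ p₀ + (c : ℝ) • Em p₀ p₁ + (-s : ℝ) • Em p₀ p₂ + Em p₁ p₀ - Em p₁ p₁ + (-s : ℝ) • Em p₂ p₁ + (-1-c : ℝ) • Em p₂ p₂) *
      (1 + (-1+c : ℝ) • Em p₁ p₁ + (s : ℝ) • Em p₁ p₂ + (-s : ℝ) • Em p₂ p₁ + (-1+c : ℝ) • Em p₂ p₂) =
      1 - Em p₀ p₀ + (c*c+s*s : ℝ) • Em p₀ p₁ + Em p₁ p₀ - Em p₁ p₁ + (-1-c*c-s*s : ℝ) • Em p₂ p₂ := by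
    simp only [mul_add, add_mul, mul_sub, sub_mul, mul_one, one_mul, smul_mul_assoc,
      mul_smul_comm, smul_smul, Em_mul_same, Em_mul_ne h01, Em_mul_ne h10, Em_mul_ne h02,
      Em_mul_ne h20, Em_mul_ne h12, Em_mul_ne h21, smul_zero, mul_zero, zero_mul, add_zero,
      zero_add, sub_zero, zero_sub] <;> module
  have step5 : (1 - Em p₀ p₀ + (c*c+s*s : ℝ) • Em p₀ p₁ + Em p₁ p₀ - Em p₁ p₁ + (-1-c*c-s*s : ℝ) • Em p₂ p₂) *
      (1 - Em p₀ p₀ + Em p₀ p₁ - Em p₁ p₀ - Em p₁ p₁) =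
      1 + (-1-c*c-s*s : ℝ) • Em p₀ p₀ + (-1-c*c-s*s : ℝ) • Em p₂ p₂ := by
    simp only [mul_add, add_mul, mul_sub, sub_mul, mul_one, one_mul, smul_mul_assoc,
      mul_smul_comm, smul_smul, Em_mul_same, Em_mul_ne h01, Em_mul_ne h10, Em_mul_ne h02,
      Em_mul_ne h20, Em_mul_ne h12, Em_mul_ne h21, smul_zero, mul_zero, zero_mul, add_zero,
      zero_add, sub_zero, zero_sub] <;> module
  rw [step1, step2, step3, step4, step5]


theorem diag_eq {n : ℕ} {p₀ p₂ : Fin n} (h : p₀ ≠ p₂) :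
    (1 : Matrix (Fin n) (Fin n) ℝ) + (-2 : ℝ) • Em p₀ p₀ + (-2 : ℝ) • Em p₂ p₂
      = Matrix.diagonal (fun k : Fin n => if k = p₀ ∨ k = p₂ then (-1 : ℝ) else 1) := by
  ext a b
  by_cases hab : a = b <;> by_cases h0 : a = p₀ <;> by_cases h2 : a = p₂ <;>
    simp_all [Em, Matrix.single, Matrix.one_apply, Matrix.diagonal_apply] <;>
    norm_num <;> aesop

/-- `(exp((π/2)A_{i+1}) exp(−t A_i) exp((π/2)A_{i+1}))⁻¹ · exp((π/2)A_i) exp(t A_{i+1}) exp((π/2)A_i)`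
is the diagonal matrix with `−1` at positions `i` and `i+2` and `1` elsewhere. -/
theorem braid_diag_relation {n : ℕ} (i₀ i₁ i₂ : Fin n)
    (h₁ : (i₁ : ℕ) = (i₀ : ℕ) + 1) (h₂ : (i₂ : ℕ) = (i₁ : ℕ) + 1) (t : ℝ) :
    (exp ((π / 2) • Amat i₁ i₂) * exp ((-t) • Amat i₀ i₁) *
        exp ((π / 2) • Amat i₁ i₂))⁻¹ *
      (exp ((π / 2) • Amat i₀ i₁) * exp (t • Amat i₁ i₂) *
        exp ((π / 2) • Amat i₀ i₁))
      = Matrix.diagonal (fun k : Fin n => if k = i₀ ∨ k = i₂ then (-1 : ℝ) else 1) := by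
  have h01 : i₀ ≠ i₁ := Fin.ne_of_val_ne (by omega)
  have h10 : i₁ ≠ i₀ := Fin.ne_of_val_ne (by omega)
  have h02 : i₀ ≠ i₂ := Fin.ne_of_val_ne (by omega)
  have h20 : i₂ ≠ i₀ := Fin.ne_of_val_ne (by omega)
  have h12 : i₁ ≠ i₂ := Fin.ne_of_val_ne (by omega)
  have h21 : i₂ ≠ i₁ := Fin.ne_of_val_ne (by omega)
  simp only [Matrix.mul_inv_rev, ← Matrix.exp_neg, ← neg_smul, neg_neg]
  rw [exp_Amat_neg h12, exp_Amat h01 t, exp_Amat_pos h01, exp_Amat h12 t]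
  simp only [← mul_assoc]
  rw [sixprod i₀ i₁ i₂ h01 h10 h02 h20 h12 h21 (Real.sin t) (Real.cos t)]
  have hsc : (-1 - Real.cos t * Real.cos t - Real.sin t * Real.sin t : ℝ) = -2 := by
    nlinarith [Real.sin_sq_add_cos_sq t]
  rw [hsc, diag_eq h02]
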